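/- For every rooted tree t with pairwise distinct leaf labels and all label sets S ⊆ S', the counter is monotone: counter_S(v) ≤ counter_{S'}(v) for every vertex v of t. In particular, a vertex that is complete with respect to S remains complete with respect to S'. -/

import Mathlib

inductive RTree (α : Type*) where
  | leaf (a : α)
  | node (children : List (RTree α))

namespace RTree

variable {α : Type*} [DecidableEq α]

/-- The list of leaf labels of a tree. -/
def leafList : RTree α → List α
  | leaf a => [a]
  | node cs => (cs.attach.map fun ⟨w, _⟩ => leafList w).flatten
decreasing_by have := List.sizeOf_lt_of_mem ‹_›; simp only [node.sizeOf_spec]; omega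

/-- `L v` is the finite set of labels of leaves in the subtree rooted at `v`. -/
def L (v : RTree α) : Finset α := (leafList v).toFinset

/-- The counter function. -/
def counter (S : Finset α) : RTree α → ℕ
  | leaf a => if a ∈ S then 1 else 0
  | node cs =>
      (cs.attach.map fun ⟨w, _⟩ =>
        if counter S w = (L w).card then counter S w else 0).sum
decreasing_by have := List.sizeOf_lt_of_mem ‹_›; simp only [node.sizeOf_spec]; omega

/-- `IsVertex v t` means that `v` is a vertex (subtree) of `t`. -/
inductive IsVertex : RTree α → RTree α → Prop
  | refl (t : RTree α) : IsVertex t t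
  | child {v w : RTree α} {cs : List (RTree α)} : w ∈ cs → IsVertex v w → IsVertex v (node cs)

/-- The list of all vertices (subtrees) of a tree. -/
def vertexList : RTree α → List (RTree α)
  | leaf a => [leaf a]
  | node cs => node cs :: (cs.attach.map fun ⟨w, _⟩ => vertexList w).flatten
decreasing_by have := List.sizeOf_lt_of_mem ‹_›; simp only [node.sizeOf_spec]; omega



theorem leafList_sublist {v t : RTree α} (h : IsVertex v t) : v.leafList.Sublist t.leafList := by
  induction h with
  | refl => exact List.Sublist.refl _
  | @child w cs hmem hv ih =>
    refine ih.trans ?_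
    rw [show leafList (node cs) = (cs.attach.map fun ⟨w, _⟩ => leafList w).flatten from by
      rw [leafList]]
    exact List.sublist_flatten_of_mem (List.mem_map_of_mem (List.mem_attach cs ⟨w, hmem⟩))

theorem list_sum_eq_aux {β : Type*} (l : List β) (f g : β → ℕ)
    (h : ∀ x ∈ l, f x ≤ g x) (he : (l.map f).sum = (l.map g).sum) :
    ∀ x ∈ l, f x = g x := by
  induction l with
  | nil => simp
  | cons a l ih =>
    simp only [List.map_cons, List.sum_cons] at he
    have h1 : f a ≤ g a := h a (List.mem_cons_self)
    have h2 : (l.map f).sum ≤ (l.map g).sum :=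
      List.sum_le_sum fun x hx => h x (List.mem_cons_of_mem _ hx)
    have hfa : f a = g a := by omega
    have hsum : (l.map f).sum = (l.map g).sum := by omega
    intro x hx
    rcases List.mem_cons.mp hx with rfl | hx
    · exact hfa
    · exact ih (fun y hy => h y (List.mem_cons_of_mem _ hy)) hsum x hx

theorem counter_mono_aux (S S' : Finset α) (hss : S ⊆ S') :
    (v : RTree α) → v.leafList.Nodup →
      counter S v ≤ (L v).card ∧ counter S v ≤ counter S' v ∧
        (counter S v = (L v).card → counter S' v = (L v).card)
  | leaf a, _ => by
    simp only [counter, L, leafList, List.toFinset_cons, List.toFinset_nil,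
      insert_empty_eq, Finset.card_singleton]
    by_cases h : a ∈ S
    · have h' : a ∈ S' := hss h
      simp [h, h']
    · simp [h]
  | node cs, hnd => by
    have hnode_leaf : leafList (node cs) = (cs.attach.map fun ⟨w, _⟩ => leafList w).flatten := by
      rw [leafList]
    have hcnt : ∀ T : Finset α, counter T (node cs) =
        (cs.attach.map fun x =>
          if counter T x.1 = (L x.1).card then counter T x.1 else 0).sum := by
      intro T; rw [counter]
    have hndc : ∀ x : {w // w ∈ cs}, (leafList x.1).Nodup := by
      intro x
      have hmem : leafList x.1 ∈ cs.attach.map fun ⟨w, _⟩ => leafList w :=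
        List.mem_map_of_mem (List.mem_attach cs x)
      exact (List.sublist_flatten_of_mem hmem).nodup (hnode_leaf ▸ hnd)
    have IH : ∀ x : {w // w ∈ cs},
        counter S x.1 ≤ (L x.1).card ∧ counter S x.1 ≤ counter S' x.1 ∧
          (counter S x.1 = (L x.1).card → counter S' x.1 = (L x.1).card) :=
      fun x => counter_mono_aux S S' hss x.1 (hndc x)
    have hcard : (L (node cs)).card =
        (cs.attach.map fun x => (L x.1).card).sum := by
      have h1 : (L (node cs)).card = (leafList (node cs)).length := by
        rw [L, List.toFinset_card_of_nodup hnd]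
      have h2 : ∀ x : {w // w ∈ cs}, (L x.1).card = (leafList x.1).length := by
        intro x; rw [L, List.toFinset_card_of_nodup (hndc x)]
      rw [h1, hnode_leaf, List.length_flatten, List.map_map]
      congr 1
      exact (List.map_congr_left fun x _ => (h2 x).symm)
    set fS : {w // w ∈ cs} → ℕ := fun x =>
      if counter S x.1 = (L x.1).card then counter S x.1 else 0 with hfS
    set fS' : {w // w ∈ cs} → ℕ := fun x =>
      if counter S' x.1 = (L x.1).card then counter S' x.1 else 0 with hfS'
    have hfle : ∀ x ∈ cs.attach, fS x ≤ (L x.1).card := by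
      intro x _
      simp only [hfS]
      split
      · omega
      · omega
    have hfmono : ∀ x ∈ cs.attach, fS x ≤ fS' x := by
      intro x _
      simp only [hfS, hfS']
      split
      · rename_i h
        rw [(IH x).2.2 h]
        simp [h]
      · omega
    have hle1 : counter S (node cs) ≤ (L (node cs)).card := by
      rw [hcnt S, hcard]
      exact List.sum_le_sum hfle
    have hle2 : counter S (node cs) ≤ counter S' (node cs) := by
      rw [hcnt S, hcnt S']
      exact List.sum_le_sum hfmono
    refine ⟨hle1, hle2, fun hcomp => ?_⟩
    rw [hcnt S] at hcomp
    rw [hcard] at hcomp ⊢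
    rw [hcnt S']
    have heach : ∀ x ∈ cs.attach, fS x = (L x.1).card :=
      list_sum_eq_aux cs.attach fS (fun x => (L x.1).card) hfle hcomp
    have heach' : ∀ x ∈ cs.attach, fS' x = (L x.1).card := by
      intro x hx
      have h1 := heach x hx
      have hcS : counter S x.1 = (L x.1).card := by
        by_cases h : counter S x.1 = (L x.1).card
        · exact h
        · simp only [hfS, if_neg h] at h1
          have := (IH x).1
          omega
      have hcS' := (IH x).2.2 hcS
      simp [hfS', hcS']
    congr 1
    exact List.map_congr_left heach'
decreasing_by have := List.sizeOf_lt_of_mem x.2; simp only [node.sizeOf_spec]; omega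

/-- the counter is monotone: if `S ⊆ S'` then `counter_S(v) ≤ counter_{S'}(v)`;
in particular a vertex complete with respect to `S` remains complete with respect to `S'`. -/
theorem counter_mono (t : RTree α) (hnd : t.leafList.Nodup)
    (S S' : Finset α) (hss : S ⊆ S') (v : RTree α) (hv : IsVertex v t) :
    counter S v ≤ counter S' v ∧
      (counter S v = (L v).card → counter S' v = (L v).card) := by
  have hndv : v.leafList.Nodup := (leafList_sublist hv).nodup hnd
  have h := counter_mono_aux S S' hss v hndv
  exact ⟨h.2.1, h.2.2⟩

end RTree
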